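/- arXiv:1703.04660 — 4 statements merged into one kernel-verified Lean document; each statement's English description precedes it below -/
import Mathlib

section
/- For every ε with 0 < ε < 3/4, there exists n ∈ ℕ such that P^[n](0) ∈ [1,2], where P(x) = x² + 1/4 + ε. Consequently, the postcritical set Ω(P_{1/4+ε}) contains a point of [1,2], and since Ω(P_{1/4}) ⊆ [0,1/2], the Hausdorff distance between Ω(P_{1/4+ε}) and Ω(P_{1/4}) is at least 1/2. -/
/-- The postcritical set of the quadratic map `P_c(x) = x² + c`: the closure of
the forward orbit of the critical point `0`. -/
def postcriticalSet (c : ℝ) : Set ℝ :=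
  closure (Set.range fun n : ℕ => (fun x : ℝ => x ^ 2 + c)^[n] 0)

/-- For every `0 < ε < 3/4` there is `n` with `P_{1/4+ε}^[n](0) ∈ [1,2]`;
consequently the postcritical set `Ω(P_{1/4+ε})` meets `[1,2]`, while
`Ω(P_{1/4}) ⊆ [0,1/2]`, so the Hausdorff distance between the two postcritical
sets is at least `1/2`. -/
theorem postcritical_sets_parabolic_implosion (ε : ℝ) (hε : 0 < ε) (hε' : ε < 3 / 4) :
    (∃ n : ℕ, (fun x : ℝ => x ^ 2 + (1 / 4 + ε))^[n] 0 ∈ Set.Icc (1 : ℝ) 2) ∧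
    (postcriticalSet (1 / 4 + ε) ∩ Set.Icc (1 : ℝ) 2).Nonempty ∧
    postcriticalSet (1 / 4) ⊆ Set.Icc (0 : ℝ) (1 / 2) ∧
    (1 / 2 : ENNReal) ≤ EMetric.hausdorffEdist (postcriticalSet (1 / 4 + ε)) (postcriticalSet (1 / 4)) := by
  classical
  set f : ℝ → ℝ := fun x => x ^ 2 + (1 / 4 + ε) with hf
  have hnonneg : ∀ n, 0 ≤ f^[n] 0 := by
    intro n; induction n with
    | zero => simp
    | succ n ih =>
      rw [Function.iterate_succ_apply']
      simp only [hf]; nlinarith [sq_nonneg (f^[n] 0)]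
  have hstep : ∀ x : ℝ, x + ε ≤ f x := by
    intro x; simp only [hf]; nlinarith [sq_nonneg (x - 1/2)]
  have hexists : ∃ n, 1 ≤ f^[n] 0 := by
    by_contra h
    push_neg at h
    have hgrow : ∀ n : ℕ, (n : ℝ) * ε ≤ f^[n] 0 := by
      intro n; induction n with
      | zero => simp
      | succ n ih =>
        rw [Function.iterate_succ_apply']
        have := hstep (f^[n] 0)
        push_cast; nlinarith
    obtain ⟨n, hn⟩ := exists_nat_gt (1 / ε)
    have h1 := hgrow n
    have h2 := h n
    rw [div_lt_iff₀ hε] at hn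
    linarith
  obtain ⟨n, hn1, hmin⟩ : ∃ n, 1 ≤ f^[n] 0 ∧ ∀ m < n, f^[m] 0 < 1 :=
    ⟨Nat.find hexists, Nat.find_spec hexists,
      fun m hm => lt_of_not_ge (Nat.find_min hexists hm)⟩
  have hn2 : f^[n] 0 ≤ 2 := by
    rcases Nat.eq_zero_or_pos n with h0 | hpos
    · subst h0; simpa using hn1
    · obtain ⟨m, rfl⟩ := Nat.exists_eq_succ_of_ne_zero hpos.ne'
      have hlt : f^[m] 0 < 1 := hmin m (Nat.lt_succ_self m)
      have h0 : 0 ≤ f^[m] 0 := hnonneg m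
      rw [Function.iterate_succ_apply']
      simp only [hf]; nlinarith
  have key : ∀ n : ℕ, (fun x : ℝ => x ^ 2 + 1 / 4)^[n] 0 ∈ Set.Icc (0 : ℝ) (1 / 2) := by
    intro k; induction k with
    | zero => constructor <;> norm_num
    | succ k ih =>
      obtain ⟨h1, h2⟩ := ih
      rw [Function.iterate_succ_apply']
      show 0 ≤ (fun x : ℝ => x ^ 2 + 1 / 4)^[k] 0 ^ 2 + 1 / 4 ∧
        (fun x : ℝ => x ^ 2 + 1 / 4)^[k] 0 ^ 2 + 1 / 4 ≤ 1 / 2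
      constructor
      · nlinarith
      · nlinarith
  have hsub : postcriticalSet (1 / 4) ⊆ Set.Icc (0 : ℝ) (1 / 2) := by
    apply closure_minimal _ isClosed_Icc
    rintro _ ⟨k, rfl⟩
    exact key k
  have hp : f^[n] 0 ∈ postcriticalSet (1 / 4 + ε) :=
    subset_closure ⟨n, rfl⟩
  refine ⟨⟨n, hn1, hn2⟩, ⟨f^[n] 0, hp, hn1, hn2⟩, hsub, ?_⟩
  calc (1 / 2 : ENNReal)
      ≤ EMetric.infEdist (f^[n] 0) (postcriticalSet (1 / 4)) := by
        refine EMetric.le_infEdist.2 ?_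
        intro y hy
        obtain ⟨hy0, hy1⟩ := hsub hy
        rw [edist_dist, show (1 / 2 : ENNReal) = ENNReal.ofReal (1 / 2) by
          rw [ENNReal.ofReal_div_of_pos (by norm_num)]; norm_num]
        apply ENNReal.ofReal_le_ofReal
        rw [Real.dist_eq, abs_of_nonneg (by linarith)]
        linarith
    _ ≤ _ := EMetric.infEdist_le_hausdorffEdist_of_mem hp
end

section
/- The real quadratic map P(x) = x² - 7/4 has a parabolic periodic orbit of period 3 with multiplier 1: there exists w ∈ ℝ such that P^[3](w) = w, P(w) ≠ w, and the derivative of P^[3] at w equals 1. -/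
/-- The real quadratic map `P(x) = x² - 7/4` has a parabolic periodic orbit of
period `3` with multiplier `1`: there is `w` with `P^[3](w) = w`, `P(w) ≠ w`,
and `(P^[3])′(w) = 1`. -/
theorem parabolic_period_three_orbit :
    ∃ w : ℝ, (fun x : ℝ => x ^ 2 - 7 / 4)^[3] w = w ∧
      (fun x : ℝ => x ^ 2 - 7 / 4) w ≠ w ∧
      deriv ((fun x : ℝ => x ^ 2 - 7 / 4)^[3]) w = 1 := by
  -- the cubic whose roots form the parabolic 3-cycle
  set R : ℝ → ℝ := fun x => x ^ 3 + x ^ 2 / 2 - 9 * x / 4 - 1 / 8 with hRdef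
  have hcont : ContinuousOn R (Set.Icc (0:ℝ) 2) := by
    apply Continuous.continuousOn; fun_prop
  have h0 : R 0 ≤ 0 := by norm_num [hRdef]
  have h2 : (0:ℝ) ≤ R 2 := by norm_num [hRdef]
  obtain ⟨w, hw01, hw⟩ : ∃ w ∈ Set.Icc (0:ℝ) 2, R w = 0 := by
    have := intermediate_value_Icc (by norm_num : (0:ℝ) ≤ 2) hcont
    have h := this ⟨h0, h2⟩
    obtain ⟨w, hw1, hw2⟩ := h
    exact ⟨w, hw1, hw2⟩
  have hRw : w ^ 3 + w ^ 2 / 2 - 9 * w / 4 - 1 / 8 = 0 := hw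
  -- key polynomial identity
  have hP3 : (fun x : ℝ => x ^ 2 - 7 / 4)^[3]
      = fun x : ℝ => x + (x ^ 2 - x - 7 / 4) * (x ^ 3 + x ^ 2 / 2 - 9 * x / 4 - 1 / 8) ^ 2 := by
    funext x
    show ((fun x : ℝ => x ^ 2 - 7 / 4) ∘ (fun x : ℝ => x ^ 2 - 7 / 4) ∘
        (fun x : ℝ => x ^ 2 - 7 / 4)) x = _
    simp only [Function.comp_apply]
    ring
  refine ⟨w, ?_, ?_, ?_⟩
  · rw [hP3]; simp only []; rw [hRw]; ring
  · -- P w ≠ w since the fixed-point quadratic doesn't vanish at w (Bézout)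
    intro h
    have hq : w ^ 2 - w - 7 / 4 = 0 := by
      simp only at h
      linarith
    have : (7 / 2 - w) * (w ^ 3 + w ^ 2 / 2 - 9 * w / 4 - 1 / 8)
        + (w ^ 2 - 2 * w - 17 / 4) * (w ^ 2 - w - 7 / 4) = 7 := by ring
    rw [hRw, hq] at this
    norm_num at this
  · rw [hP3]
    have hq : HasDerivAt (fun x : ℝ => x ^ 2 - x - 7 / 4) (2 * w - 1) w := by
      have := (((hasDerivAt_pow 2 w).sub (hasDerivAt_id w)).sub_const (7 / 4))
      simpa using this
    have hc : HasDerivAt (fun x : ℝ => x ^ 3 + x ^ 2 / 2 - 9 * x / 4 - 1 / 8)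
        (3 * w ^ 2 + w - 9 / 4) w := by
      have := (((hasDerivAt_pow 3 w).add ((hasDerivAt_pow 2 w).div_const 2)).sub
        (((hasDerivAt_id w).const_mul 9).div_const 4)).sub_const (1 / 8)
      refine this.congr_deriv ?_
      norm_num
    have htot : HasDerivAt
        (fun x : ℝ => x + (x ^ 2 - x - 7 / 4) * (x ^ 3 + x ^ 2 / 2 - 9 * x / 4 - 1 / 8) ^ 2)
        (1 + ((2 * w - 1) * (w ^ 3 + w ^ 2 / 2 - 9 * w / 4 - 1 / 8) ^ 2
          + (w ^ 2 - w - 7 / 4) * (2 * (w ^ 3 + w ^ 2 / 2 - 9 * w / 4 - 1 / 8) ^ 1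
              * (3 * w ^ 2 + w - 9 / 4)))) w :=
      (hasDerivAt_id w).add (hq.mul (hc.pow 2))
    rw [htot.deriv, hRw]
    ring
end

section
/- For the real quadratic map P(x) = x² - 7/4, the subsequence (P^[3n](0))_{n≥0} of the critical orbit converges to a point w satisfying P^[3](w) = w and P(w) ≠ w (the parabolic period-3 point of P nearest to 0). -/
open Filter

/-- The third iterate of `x ↦ x² - 7/4` as an explicit polynomial map. -/
noncomputable def Q3 (x : ℝ) : ℝ := ((x ^ 2 - 7 / 4) ^ 2 - 7 / 4) ^ 2 - 7 / 4

lemma Q3_eq_iterate : (fun x : ℝ => x ^ 2 - 7 / 4)^[3] = Q3 := by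
  funext x
  simp only [Function.iterate_succ, Function.iterate_zero, Function.comp_apply, id_eq, Q3]

lemma Q3_continuous : Continuous Q3 := by
  unfold Q3; fun_prop

/-- Monotonicity of `Q3` on `[-1/16, 0]`. -/
lemma Q3_mono {x y : ℝ} (hy : -(1:ℝ)/16 ≤ y) (hyx : y ≤ x) (hx : x ≤ 0) :
    Q3 y ≤ Q3 x := by
  have hy0 : y ≤ 0 := le_trans hyx hx
  have hx16 : -(1:ℝ)/16 ≤ x := le_trans hy hyx
  have h1 : x + y ≤ 0 := by linarith
  have h2 : (x ^ 2 - 7 / 4) + (y ^ 2 - 7 / 4) < 0 := by nlinarith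
  have h3 : ((x ^ 2 - 7 / 4) ^ 2 - 7 / 4) + ((y ^ 2 - 7 / 4) ^ 2 - 7 / 4) > 0 := by nlinarith
  have key : Q3 x - Q3 y =
      (x - y) * (x + y) * ((x ^ 2 - 7 / 4) + (y ^ 2 - 7 / 4)) *
        (((x ^ 2 - 7 / 4) ^ 2 - 7 / 4) + ((y ^ 2 - 7 / 4) ^ 2 - 7 / 4)) := by
    unfold Q3; ring
  have p1 : (x - y) * (x + y) ≤ 0 :=
    mul_nonpos_of_nonneg_of_nonpos (by linarith) h1
  have p2 : 0 ≤ (x - y) * (x + y) * ((x ^ 2 - 7 / 4) + (y ^ 2 - 7 / 4)) := by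
    have := mul_nonneg (neg_nonneg.2 p1) (neg_nonneg.2 h2.le)
    nlinarith [this]
  nlinarith [mul_nonneg p2 h3.le]

/-- `Q3 x ≤ x` on `[-1/16, 0]`. -/
lemma Q3_le_self {x : ℝ} (hx1 : -(1:ℝ)/16 ≤ x) (hx2 : x ≤ 0) : Q3 x ≤ x := by
  have key : Q3 x - x =
      (x ^ 2 - x - 7 / 4) * (x ^ 3 + x ^ 2 / 2 - 9 * x / 4 - 1 / 8) ^ 2 := by
    unfold Q3; ring
  have hneg : x ^ 2 - x - 7 / 4 < 0 := by nlinarith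
  nlinarith [sq_nonneg (x ^ 3 + x ^ 2 / 2 - 9 * x / 4 - 1 / 8),
    mul_nonpos_of_nonpos_of_nonneg hneg.le
      (sq_nonneg (x ^ 3 + x ^ 2 / 2 - 9 * x / 4 - 1 / 8))]

/-- For `P(x) = x² - 7/4`, the subsequence `(P^[3n](0))` of the critical orbit
converges to a point `w` with `P^[3](w) = w` and `P(w) ≠ w`. -/
theorem critical_orbit_converges_to_parabolic_period_three :
    ∃ w : ℝ, Filter.Tendsto (fun n : ℕ => (fun x : ℝ => x ^ 2 - 7 / 4)^[3 * n] 0)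
        Filter.atTop (nhds w) ∧
      (fun x : ℝ => x ^ 2 - 7 / 4)^[3] w = w ∧
      (fun x : ℝ => x ^ 2 - 7 / 4) w ≠ w := by
  -- the cubic whose square factors Q3 x - x
  set g : ℝ → ℝ := fun x => x ^ 3 + x ^ 2 / 2 - 9 * x / 4 - 1 / 8 with hg
  -- find a root w of g in [-1/16, 0]
  have hcont : ContinuousOn g (Set.Icc (-(1:ℝ)/16) 0) := by
    unfold g; fun_prop
  have hsub := intermediate_value_Icc' (by norm_num : -(1:ℝ)/16 ≤ 0) hcont
  have h0mem : (0:ℝ) ∈ Set.Icc (g 0) (g (-(1:ℝ)/16)) := by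
    constructor <;> (simp only [hg]; norm_num)
  obtain ⟨w, hwmem, hwroot⟩ := hsub h0mem
  obtain ⟨hw1, hw2⟩ := hwmem
  -- Q3 fixes w
  have hQw : Q3 w = w := by
    have key : Q3 w - w = (w ^ 2 - w - 7 / 4) * (g w) ^ 2 := by unfold Q3; simp only [hg]; ring
    rw [hwroot] at key
    simp at key
    linarith
  -- the orbit
  set a : ℕ → ℝ := fun n => Q3^[n] 0 with ha
  have hstep : ∀ n, a (n + 1) = Q3 (a n) := fun n => Function.iterate_succ_apply' Q3 n 0
  have hinv : ∀ n, w ≤ a n ∧ a n ≤ 0 := by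
    intro n
    induction n with
    | zero => simp [ha, hw2]
    | succ k ih =>
      obtain ⟨ih1, ih2⟩ := ih
      have hk16 : -(1:ℝ)/16 ≤ a k := le_trans hw1 ih1
      constructor
      · rw [hstep]
        calc w = Q3 w := hQw.symm
          _ ≤ Q3 (a k) := Q3_mono hw1 ih1 ih2
      · rw [hstep]
        exact le_trans (Q3_le_self hk16 ih2) ih2
  have hanti : Antitone a := by
    apply antitone_nat_of_succ_le
    intro n
    rw [hstep]
    exact Q3_le_self (le_trans hw1 (hinv n).1) (hinv n).2
  have hbdd : BddBelow (Set.range a) := ⟨w, by rintro _ ⟨n, rfl⟩; exact (hinv n).1⟩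
  have hL : Tendsto a atTop (nhds (⨅ n, a n)) := tendsto_atTop_ciInf hanti hbdd
  set L : ℝ := ⨅ n, a n with hLdef
  -- L is fixed by Q3
  have hQL : Q3 L = L := by
    have h1 : Tendsto (fun n => Q3 (a n)) atTop (nhds (Q3 L)) :=
      (Q3_continuous.tendsto L).comp hL
    have h2 : (fun n => Q3 (a n)) = fun n => a (n + 1) := by
      funext n; exact (hstep n).symm
    have h3 : Tendsto (fun n => a (n + 1)) atTop (nhds L) :=
      hL.comp (tendsto_add_atTop_nat 1)
    rw [h2] at h1
    exact tendsto_nhds_unique h1 h3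
  -- bounds on L
  have hLw : w ≤ L := le_ciInf fun n => (hinv n).1
  have hL0 : L ≤ 0 := by
    have := ciInf_le hbdd 0
    simpa [ha] using this
  have hL16 : -(1:ℝ)/16 ≤ L := le_trans hw1 hLw
  refine ⟨L, ?_, ?_, ?_⟩
  · have heq : (fun n : ℕ => (fun x : ℝ => x ^ 2 - 7 / 4)^[3 * n] 0) = a := by
      funext n
      rw [Function.iterate_mul, Q3_eq_iterate]
    rw [heq]
    exact hL
  · rw [Q3_eq_iterate]; exact hQL
  · intro h
    simp only at h
    nlinarith [hL16, hL0]
end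

section
/- Let D = B(z₀, r) ⊆ ℂ be an open disk and let f be a function holomorphic on a neighbourhood of the closed disk D̄ such that f(D̄) ⊆ D. Then f has a unique fixed point p in D, this fixed point is attracting (|f′(p)| < 1), and the diameters of the iterated images decay geometrically: there exist C > 0 and 0 < λ < 1 such that for every k ∈ ℕ, the diameter of f^[k](D̄) is at most C·λ^k; in particular f^[k](z) → p uniformly on D̄. -/
open Metric Set Function Filter Complex
open scoped Topology

section SchwarzContractionAux

noncomputable def moeb (a z : ℂ) : ℂ := (a - z) / (1 - (starRingEnd ℂ) a * z)

lemma den_ne {a z : ℂ} (ha : ‖a‖ < 1) (hz : ‖z‖ ≤ 1) : (1 : ℂ) - (starRingEnd ℂ) a * z ≠ 0 := by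
  intro h
  have h1 : (starRingEnd ℂ) a * z = 1 := by linear_combination -h
  have := congrArg norm h1
  rw [norm_mul, norm_one] at this
  have hca : ‖(starRingEnd ℂ) a‖ = ‖a‖ := RCLike.norm_conj a
  nlinarith [norm_nonneg a, norm_nonneg z]

lemma normSq_identity (a z : ℂ) :
    ‖1 - (starRingEnd ℂ) a * z‖ ^ 2 - ‖a - z‖ ^ 2 = (1 - ‖a‖ ^ 2) * (1 - ‖z‖ ^ 2) := by
  simp only [Complex.sq_norm]
  simp [Complex.normSq_apply, Complex.mul_re, Complex.mul_im, Complex.sub_re, Complex.sub_im]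
  ring

lemma moeb_norm_eq (a z : ℂ) : ‖moeb a z‖ = ‖a - z‖ / ‖1 - (starRingEnd ℂ) a * z‖ := by
  rw [moeb, norm_div]

lemma moeb_lt_one {a z : ℂ} (ha : ‖a‖ < 1) (hz : ‖z‖ < 1) : ‖moeb a z‖ < 1 := by
  have hden := den_ne ha hz.le
  have hpos : 0 < ‖1 - (starRingEnd ℂ) a * z‖ := norm_pos_iff.2 hden
  rw [moeb_norm_eq, div_lt_one hpos]
  have h := normSq_identity a z
  have hA : ‖a‖ ^ 2 < 1 := by nlinarith [norm_nonneg a]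
  have hZ : ‖z‖ ^ 2 < 1 := by nlinarith [norm_nonneg z]
  have hprod : 0 < (1 - ‖a‖ ^ 2) * (1 - ‖z‖ ^ 2) := by nlinarith
  have : ‖a - z‖ ^ 2 < ‖1 - (starRingEnd ℂ) a * z‖ ^ 2 := by nlinarith
  exact lt_of_pow_lt_pow_left₀ 2 (norm_nonneg _) this

lemma moeb_invol {a z : ℂ} (ha : ‖a‖ < 1) (hz : ‖z‖ < 1) : moeb a (moeb a z) = z := by
  have hden := den_ne ha hz.le
  have h1 : (1 : ℂ) - (starRingEnd ℂ) a * a ≠ 0 := by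
    intro h
    have h2 : (starRingEnd ℂ) a * a = 1 := by linear_combination -h
    have := congrArg norm h2
    rw [norm_mul, norm_one, RCLike.norm_conj] at this
    nlinarith [norm_nonneg a]
  have h1' : (1 : ℂ) - a * (starRingEnd ℂ) a ≠ 0 := by rwa [mul_comm] at h1
  rw [moeb, moeb]
  have e1 : a - (a - z) / (1 - (starRingEnd ℂ) a * z)
      = z * (1 - (starRingEnd ℂ) a * a) / (1 - (starRingEnd ℂ) a * z) := by
    rw [eq_div_iff hden, sub_mul, div_mul_cancel₀ _ hden]; ring
  have e2 : 1 - (starRingEnd ℂ) a * ((a - z) / (1 - (starRingEnd ℂ) a * z))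
      = (1 - (starRingEnd ℂ) a * a) / (1 - (starRingEnd ℂ) a * z) := by
    rw [mul_div_assoc', eq_div_iff hden, sub_mul, div_mul_cancel₀ _ hden]; ring
  rw [e1, e2, div_div_div_cancel_right₀ hden, mul_div_assoc, div_self h1, mul_one]

lemma moeb_diff {a : ℂ} (ha : ‖a‖ < 1) : DifferentiableOn ℂ (moeb a) (ball 0 1) := by
  apply DifferentiableOn.div
  · exact (differentiable_const a).differentiableOn.sub differentiable_id.differentiableOn
  · exact (differentiable_const (1:ℂ)).differentiableOn.sub
      ((differentiable_const _).mul differentiable_id).differentiableOn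
  · intro z hz
    exact den_ne ha (le_of_lt (mem_ball_zero_iff.1 hz))

lemma moeb_mapsTo {a : ℂ} (ha : ‖a‖ < 1) : MapsTo (moeb a) (ball 0 1) (ball 0 1) := fun z hz =>
  mem_ball_zero_iff.2 (moeb_lt_one ha (mem_ball_zero_iff.1 hz))

lemma moeb_self (a : ℂ) : moeb a a = 0 := by simp [moeb]

lemma moeb_zero (a : ℂ) : moeb a 0 = a := by simp [moeb]

/-- Schwarz–Pick lemma. -/
lemma schwarz_pick {g : ℂ → ℂ} (hd : DifferentiableOn ℂ g (ball 0 1))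
    (hm : MapsTo g (ball 0 1) (ball 0 1)) {z w : ℂ} (hz : ‖z‖ < 1) (hw : ‖w‖ < 1) :
    ‖moeb (g w) (g z)‖ ≤ ‖moeb w z‖ := by
  have hzb : z ∈ ball (0:ℂ) 1 := mem_ball_zero_iff.2 hz
  have hwb : w ∈ ball (0:ℂ) 1 := mem_ball_zero_iff.2 hw
  have hgw : ‖g w‖ < 1 := mem_ball_zero_iff.1 (hm hwb)
  set h : ℂ → ℂ := fun u => moeb (g w) (g (moeb w u)) with hh
  have hdh : DifferentiableOn ℂ h (ball 0 1) := by
    apply DifferentiableOn.comp (moeb_diff hgw)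
      (DifferentiableOn.comp hd (moeb_diff hw) (moeb_mapsTo hw))
    exact (hm.comp (moeb_mapsTo hw))
  have hmh : MapsTo h (ball 0 1) (ball 0 1) :=
    (moeb_mapsTo hgw).comp ((hm.comp (moeb_mapsTo hw)))
  have h0 : h 0 = 0 := by
    rw [hh]; simp only [moeb_zero, moeb_self]
  have hu : ‖moeb w z‖ < 1 := moeb_lt_one hw hz
  have := Complex.norm_le_norm_of_mapsTo_ball_self hdh (hmh.mono_right ball_subset_closedBall) h0 hu
  have hrw : h (moeb w z) = moeb (g w) (g z) := by
    rw [hh]; simp only [moeb_invol hw hz]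
  rw [hrw] at this
  exact this

lemma key_ineq {t : ℝ} (ht0 : 0 < t) (ht1 : t < 1) {u : ℂ} (hu : ‖u‖ ≤ 1) :
    (1 + t ^ 2) * ‖1 - u‖ ≤ 2 * ‖1 - (t ^ 2 : ℂ) * u‖ := by
  have h1 : ‖(1:ℂ) - u‖ ^ 2 = 1 - 2 * u.re + Complex.normSq u := by
    rw [Complex.sq_norm]
    simp [Complex.normSq_apply, Complex.sub_re, Complex.sub_im]
    ring
  have h2 : ‖(1:ℂ) - (t ^ 2 : ℂ) * u‖ ^ 2 = 1 - 2 * t ^ 2 * u.re + t ^ 4 * Complex.normSq u := by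
    rw [Complex.sq_norm]
    simp [Complex.normSq_apply, Complex.sub_re, Complex.sub_im, Complex.mul_re, Complex.mul_im,
      ← Complex.ofReal_pow, Complex.ofReal_re, Complex.ofReal_im]
    ring
  have hm : Complex.normSq u ≤ 1 := by
    have : ‖u‖ ^ 2 ≤ 1 := by nlinarith [norm_nonneg u]
    rwa [Complex.sq_norm] at this
  have hx : u.re ^ 2 ≤ Complex.normSq u := by
    rw [Complex.normSq_apply]; nlinarith [sq_nonneg u.im]
  have hsq : ((1 + t ^ 2) * ‖1 - u‖) ^ 2 ≤ (2 * ‖1 - (t ^ 2 : ℂ) * u‖) ^ 2 := by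
    have e1 : ((1 + t ^ 2) * ‖1 - u‖) ^ 2 = (1 + t ^ 2) ^ 2 * (1 - 2 * u.re + Complex.normSq u) := by
      rw [mul_pow, h1]
    have e2 : (2 * ‖1 - (t ^ 2 : ℂ) * u‖) ^ 2 = 4 * (1 - 2 * t ^ 2 * u.re + t ^ 4 * Complex.normSq u) := by
      rw [mul_pow, h2]; ring
    rw [e1, e2]
    have h1' : (0:ℝ) ≤ (1 - t ^ 2) ^ 2 * (u.re + 1) ^ 2 := by positivity
    have h2' : (0:ℝ) ≤ (1 - t ^ 2) ^ 2 * (Complex.normSq u - u.re ^ 2) := by nlinarith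
    have h3' : (0:ℝ) ≤ (1 - t ^ 2) * (2 + 2 * t ^ 2) * (1 - Complex.normSq u) :=
      mul_nonneg (mul_nonneg (by nlinarith) (by nlinarith)) (by nlinarith)
    nlinarith [h1', h2', h3']
  have h2n : (0:ℝ) ≤ 2 * ‖1 - (t ^ 2 : ℂ) * u‖ := by positivity
  exact le_of_pow_le_pow_left₀ (by norm_num) h2n hsq

lemma rho_scale {t : ℝ} (ht0 : 0 < t) (ht1 : t < 1) {a b : ℂ} (ha : ‖a‖ < 1) (hb : ‖b‖ < 1) :
    ‖moeb ((t:ℂ) * a) ((t:ℂ) * b)‖ ≤ 2 * t / (1 + t ^ 2) * ‖moeb a b‖ := by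
  have hta : ‖(t:ℂ) * a‖ < 1 := by
    rw [norm_mul, Complex.norm_real, Real.norm_of_nonneg ht0.le]
    nlinarith [norm_nonneg a]
  have htb : ‖(t:ℂ) * b‖ ≤ 1 := by
    rw [norm_mul, Complex.norm_real, Real.norm_of_nonneg ht0.le]
    nlinarith [norm_nonneg b]
  have hden1 : (0:ℝ) < ‖1 - (starRingEnd ℂ) a * b‖ := norm_pos_iff.2 (den_ne ha hb.le)
  have hden2 : (0:ℝ) < ‖1 - (starRingEnd ℂ) ((t:ℂ) * a) * ((t:ℂ) * b)‖ :=
    norm_pos_iff.2 (den_ne hta htb)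
  have hu : ‖(starRingEnd ℂ) a * b‖ ≤ 1 := by
    rw [norm_mul, RCLike.norm_conj]
    nlinarith [norm_nonneg a, norm_nonneg b]
  have hkey := key_ineq ht0 ht1 hu
  have hnum : ‖(t:ℂ) * a - (t:ℂ) * b‖ = t * ‖a - b‖ := by
    rw [← mul_sub, norm_mul, Complex.norm_real, Real.norm_of_nonneg ht0.le]
  have hden2' : (1:ℂ) - (starRingEnd ℂ) ((t:ℂ) * a) * ((t:ℂ) * b)
      = 1 - (t ^ 2 : ℂ) * ((starRingEnd ℂ) a * b) := by
    simp [map_mul, Complex.conj_ofReal]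
    ring
  rw [moeb_norm_eq, moeb_norm_eq, hnum, hden2']
  have hN2 : (0:ℝ) < ‖1 - (t ^ 2 : ℂ) * ((starRingEnd ℂ) a * b)‖ := by
    rw [← hden2']; exact hden2
  have hre : 2 * t / (1 + t ^ 2) * (‖a - b‖ / ‖1 - (starRingEnd ℂ) a * b‖)
      = (2 * t * ‖a - b‖) / ((1 + t ^ 2) * ‖1 - (starRingEnd ℂ) a * b‖) := by
    field_simp
  rw [hre, div_le_div_iff₀ hN2 (by positivity)]
  have hab : (0:ℝ) ≤ t * ‖a - b‖ := mul_nonneg ht0.le (norm_nonneg _)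
  nlinarith [mul_le_mul_of_nonneg_left hkey hab]

lemma two_rho {a b : ℂ} (ha : ‖a‖ < 1) (hb : ‖b‖ ≤ 1) : ‖a - b‖ ≤ 2 * ‖moeb a b‖ := by
  have hden : (0:ℝ) < ‖1 - (starRingEnd ℂ) a * b‖ := norm_pos_iff.2 (den_ne ha hb)
  have hle2 : ‖1 - (starRingEnd ℂ) a * b‖ ≤ 2 := by
    calc ‖1 - (starRingEnd ℂ) a * b‖ ≤ ‖(1:ℂ)‖ + ‖(starRingEnd ℂ) a * b‖ := norm_sub_le _ _
    _ ≤ 1 + 1 := by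
        rw [norm_one, norm_mul, RCLike.norm_conj]
        nlinarith [norm_nonneg a, norm_nonneg b]
    _ = 2 := by norm_num
  rw [moeb_norm_eq]
  rw [mul_div_assoc', le_div_iff₀ hden]
  nlinarith [norm_nonneg (a - b)]

lemma rho_bound {t : ℝ} (ht1 : t < 1) {a b : ℂ} (ha : ‖a‖ ≤ t) (hb : ‖b‖ ≤ t) (ht0 : 0 ≤ t) :
    ‖moeb a b‖ ≤ 2 * t / (1 - t ^ 2) := by
  have h1 : ‖a - b‖ ≤ 2 * t := by
    calc ‖a - b‖ ≤ ‖a‖ + ‖b‖ := norm_sub_le _ _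
    _ ≤ 2 * t := by linarith
  have h2 : 1 - t ^ 2 ≤ ‖1 - (starRingEnd ℂ) a * b‖ := by
    have h3 : ‖(starRingEnd ℂ) a * b‖ ≤ t ^ 2 := by
      rw [norm_mul, RCLike.norm_conj]
      nlinarith [norm_nonneg a, norm_nonneg b]
    calc 1 - t ^ 2 ≤ 1 - ‖(starRingEnd ℂ) a * b‖ := by linarith
    _ ≤ ‖1 - (starRingEnd ℂ) a * b‖ := by
        have := norm_sub_norm_le (1:ℂ) ((starRingEnd ℂ) a * b)
        simpa using this
  rw [moeb_norm_eq]
  exact div_le_div₀ (by linarith) h1 (by nlinarith) h2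

lemma unit_case (F : ℂ → ℂ) (hd : DifferentiableOn ℂ F (ball 0 1))
    (hcont : ContinuousOn F (closedBall 0 1))
    (hm : MapsTo F (closedBall 0 1) (ball 0 1)) :
    ∃ p ∈ ball (0:ℂ) 1, F p = p ∧
      (∀ q ∈ ball (0:ℂ) 1, F q = q → q = p) ∧
      ‖deriv F p‖ < 1 ∧
      (∃ C : ℝ, 0 < C ∧ ∃ lam : ℝ, 0 < lam ∧ lam < 1 ∧
        ∀ k : ℕ, ∀ a ∈ closedBall (0:ℂ) 1, ∀ b ∈ closedBall (0:ℂ) 1,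
          dist (F^[k] a) (F^[k] b) ≤ C * lam ^ k) ∧
      TendstoUniformlyOn (fun (k : ℕ) (z : ℂ) => F^[k] z) (fun _ => p) atTop
        (closedBall 0 1) := by
  -- choose t
  have hKcp : IsCompact (F '' closedBall 0 1) :=
    (isCompact_closedBall (0:ℂ) 1).image_of_continuousOn hcont
  obtain ⟨x₀, hx₀K, hx₀max⟩ := hKcp.exists_isMaxOn
    ⟨F 0, mem_image_of_mem F (mem_closedBall_self zero_le_one)⟩
    (continuous_norm.continuousOn)
  have hx₀lt : ‖x₀‖ < 1 := by
    obtain ⟨y, hy, rfl⟩ := hx₀K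
    exact mem_ball_zero_iff.1 (hm hy)
  set m : ℝ := max ‖x₀‖ (1/2) with hm_def
  have hm1 : m < 1 := by
    apply max_lt hx₀lt; norm_num
  have hm0 : (0:ℝ) < m := lt_of_lt_of_le (by norm_num) (le_max_right _ _)
  set t : ℝ := (1 + m) / 2 with ht_def
  have ht0 : 0 < t := by positivity
  have ht1 : t < 1 := by rw [ht_def]; linarith
  have hmt : m < t := by rw [ht_def]; linarith
  have hFt : ∀ z ∈ closedBall (0:ℂ) 1, ‖F z‖ < t := by
    intro z hz
    have : ‖F z‖ ≤ ‖x₀‖ := hx₀max (mem_image_of_mem F hz)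
    have h2 : ‖x₀‖ ≤ m := le_max_left _ _
    linarith
  -- lam
  set lam : ℝ := 2 * t / (1 + t ^ 2) with hlam_def
  have hlam0 : 0 < lam := by positivity
  have hlam1 : lam < 1 := by
    rw [hlam_def, div_lt_one (by positivity)]
    nlinarith
  -- contraction
  have hcontr : ∀ z w : ℂ, ‖z‖ < 1 → ‖w‖ < 1 →
      ‖moeb (F w) (F z)‖ ≤ lam * ‖moeb w z‖ := by
    intro z w hz hw
    set g : ℂ → ℂ := fun u => F u / (t:ℂ) with hg_def
    have hdg : DifferentiableOn ℂ g (ball 0 1) := hd.div_const _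
    have hgn : ∀ u ∈ closedBall (0:ℂ) 1, ‖g u‖ < 1 := by
      intro u hu
      rw [hg_def]
      simp only [norm_div, Complex.norm_real, Real.norm_of_nonneg ht0.le]
      rw [div_lt_one ht0]
      exact hFt u hu
    have hmg : MapsTo g (ball 0 1) (ball 0 1) := fun u hu =>
      mem_ball_zero_iff.2 (hgn u (ball_subset_closedBall hu))
    have htC : (t:ℂ) ≠ 0 := by exact_mod_cast ht0.ne'
    have hFg : ∀ u, F u = (t:ℂ) * g u := by
      intro u
      rw [hg_def, mul_div_assoc', mul_comm, mul_div_assoc, div_self htC, mul_one]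
    rw [hFg z, hFg w]
    calc ‖moeb ((t:ℂ) * g w) ((t:ℂ) * g z)‖
        ≤ lam * ‖moeb (g w) (g z)‖ := rho_scale ht0 ht1
          (hgn w (ball_subset_closedBall (mem_ball_zero_iff.2 hw)))
          (hgn z (ball_subset_closedBall (mem_ball_zero_iff.2 hz)))
    _ ≤ lam * ‖moeb w z‖ := by
        have := schwarz_pick hdg hmg hz hw
        nlinarith
  -- invariant closed ball
  have hsub1 : closedBall (0:ℂ) t ⊆ ball 0 1 := by
    intro z hz
    rw [mem_closedBall, dist_zero_right] at hz
    rw [mem_ball, dist_zero_right]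
    linarith
  have hsubcb : closedBall (0:ℂ) t ⊆ closedBall 0 1 := closedBall_subset_closedBall ht1.le
  have hFK : MapsTo F (closedBall (0:ℂ) t) (closedBall 0 t) := fun z hz =>
    mem_closedBall_zero_iff.2 (hFt z (hsubcb hz)).le
  have hFKn : ∀ n, MapsTo F^[n] (closedBall (0:ℂ) t) (closedBall 0 t) := fun n => hFK.iterate n
  set M : ℝ := 2 * t / (1 - t ^ 2) with hM_def
  have hM0 : 0 < M := div_pos (by linarith) (by nlinarith)
  have hiter : ∀ a b : ℂ, a ∈ closedBall (0:ℂ) t → b ∈ closedBall (0:ℂ) t → ∀ n : ℕ,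
      ‖moeb (F^[n] a) (F^[n] b)‖ ≤ lam ^ n * M := by
    intro a b ha hb n
    induction n with
    | zero =>
      simp only [Function.iterate_zero, id_eq, pow_zero, one_mul]
      exact rho_bound ht1 (mem_closedBall_zero_iff.1 ha) (mem_closedBall_zero_iff.1 hb) ht0.le
    | succ n ih =>
      rw [Function.iterate_succ_apply', Function.iterate_succ_apply']
      have h1 : ‖F^[n] b‖ < 1 := lt_of_le_of_lt (mem_closedBall_zero_iff.1 (hFKn n hb)) ht1
      have h2 : ‖F^[n] a‖ < 1 := lt_of_le_of_lt (mem_closedBall_zero_iff.1 (hFKn n ha)) ht1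
      calc ‖moeb (F (F^[n] a)) (F (F^[n] b))‖ ≤ lam * ‖moeb (F^[n] a) (F^[n] b)‖ :=
            hcontr _ _ h1 h2
      _ ≤ lam * (lam ^ n * M) := by nlinarith
      _ = lam ^ (n + 1) * M := by ring
  have hdistn : ∀ a b : ℂ, a ∈ closedBall (0:ℂ) t → b ∈ closedBall (0:ℂ) t → ∀ n : ℕ,
      dist (F^[n] a) (F^[n] b) ≤ 2 * M * lam ^ n := by
    intro a b ha hb n
    rw [dist_eq_norm]
    have h1 : ‖F^[n] a‖ < 1 := lt_of_le_of_lt (mem_closedBall_zero_iff.1 (hFKn n ha)) ht1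
    have h2 : ‖F^[n] b‖ ≤ 1 := le_of_lt (lt_of_le_of_lt (mem_closedBall_zero_iff.1 (hFKn n hb)) ht1)
    calc ‖F^[n] a - F^[n] b‖ ≤ 2 * ‖moeb (F^[n] a) (F^[n] b)‖ := two_rho h1 h2
    _ ≤ 2 * (lam ^ n * M) := by nlinarith [hiter a b ha hb n]
    _ = 2 * M * lam ^ n := by ring
  -- fixed point
  have ha₀ : F 0 ∈ closedBall (0:ℂ) t :=
    mem_closedBall_zero_iff.2 (hFt 0 (mem_closedBall_self zero_le_one)).le
  set x : ℕ → ℂ := fun n => F^[n] (F 0) with hx_def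
  have hxmem : ∀ n, x n ∈ closedBall (0:ℂ) t := fun n => hFKn n ha₀
  have hcauchy : CauchySeq x := by
    apply cauchySeq_of_le_geometric lam (2 * M) hlam1
    intro n
    have hx1 : x (n + 1) = F^[n] (F (F 0)) := Function.iterate_succ_apply F n (F 0)
    rw [hx1]
    exact hdistn (F 0) (F (F 0)) ha₀ (hFK ha₀) n
  obtain ⟨p, hp⟩ := cauchySeq_tendsto_of_complete hcauchy
  have hpK : p ∈ closedBall (0:ℂ) t :=
    isClosed_closedBall.mem_of_tendsto hp (Filter.Eventually.of_forall hxmem)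
  have hpb : p ∈ ball (0:ℂ) 1 := hsub1 hpK
  have hFp : F p = p := by
    have hca : ContinuousAt F p :=
      (hd.differentiableAt (isOpen_ball.mem_nhds hpb)).continuousAt
    have h1 : Tendsto (fun n => F (x n)) atTop (𝓝 (F p)) := hca.tendsto.comp hp
    have h2 : (fun n => F (x n)) = fun n => x (n + 1) := by
      funext n
      exact (Function.iterate_succ_apply' F n (F 0)).symm
    rw [h2] at h1
    have h3 : Tendsto (fun n => x (n + 1)) atTop (𝓝 p) := hp.comp (tendsto_add_atTop_nat 1)
    exact tendsto_nhds_unique h1 h3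
  have htend0 : Tendsto (fun n : ℕ => 2 * M * lam ^ n) atTop (𝓝 0) := by
    have h := (tendsto_pow_atTop_nhds_zero_of_lt_one hlam0.le hlam1).const_mul (2 * M)
    simpa using h
  have huniq : ∀ q, q ∈ closedBall (0:ℂ) t → F q = q → q = p := by
    intro q hq hFq
    have h1 : ∀ n : ℕ, dist q p ≤ 2 * M * lam ^ n := by
      intro n
      have h := hdistn q p hq hpK n
      rwa [Function.iterate_fixed hFq, Function.iterate_fixed hFp] at h
    exact dist_le_zero.1 (ge_of_tendsto' htend0 h1)
  -- derivative
  have hmball : MapsTo F (ball (0:ℂ) 1) (ball 0 1) := fun z hz =>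
    mem_ball_zero_iff.2 (lt_trans (hFt z (ball_subset_closedBall hz)) ht1)
  have hdn : ∀ n, DifferentiableOn ℂ F^[n] (ball (0:ℂ) 1) := by
    intro n
    induction n with
    | zero => simpa using differentiableOn_id
    | succ n ih =>
      rw [Function.iterate_succ']
      exact DifferentiableOn.comp hd ih (hmball.iterate n)
  have hdiffp : DifferentiableAt ℂ F p := hd.differentiableAt (isOpen_ball.mem_nhds hpb)
  have hderiv_iter : ∀ n : ℕ, deriv F^[n] p = (deriv F p) ^ n := by
    intro n
    induction n with
    | zero => simp
    | succ n ih =>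
      have hdiffn : DifferentiableAt ℂ F^[n] p :=
        (hdn n).differentiableAt (isOpen_ball.mem_nhds hpb)
      have hdF : DifferentiableAt ℂ F (F^[n] p) := by
        rw [Function.iterate_fixed hFp]; exact hdiffp
      rw [Function.iterate_succ', deriv_comp p hdF hdiffn,
        Function.iterate_fixed hFp, ih, pow_succ]
      ring
  have hballp : ball p (1 - t) ⊆ ball (0:ℂ) 1 := by
    intro z hz
    rw [mem_ball, dist_zero_right]
    rw [mem_ball, dist_eq_norm] at hz
    have h2 : ‖p‖ ≤ t := mem_closedBall_zero_iff.1 hpK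
    calc ‖z‖ ≤ ‖z - p‖ + ‖p‖ := by simpa using norm_add_le (z - p) p
    _ < 1 := by linarith
  have hderivb : ∀ n : ℕ, ‖deriv F p‖ ^ (n + 1) ≤ 4 * M * lam ^ n / (1 - t) := by
    intro n
    have hmapsn : MapsTo F^[n+1] (ball p (1 - t)) (ball (F^[n+1] p) (4 * M * lam ^ n)) := by
      intro z hz
      rw [Function.iterate_fixed hFp, mem_ball]
      have h1 : F z ∈ closedBall (0:ℂ) t :=
        mem_closedBall_zero_iff.2 (hFt z (ball_subset_closedBall (hballp hz))).le
      have h2 : dist (F^[n+1] z) p ≤ 2 * M * lam ^ n := by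
        rw [Function.iterate_succ_apply]
        have h := hdistn (F z) p h1 hpK n
        rwa [Function.iterate_fixed hFp] at h
      have h3 : 0 < M * lam ^ n := by positivity
      nlinarith
    have h := Complex.norm_deriv_le_div_of_mapsTo_ball ((hdn (n+1)).mono hballp) (hmapsn.mono_right ball_subset_closedBall)
      (by linarith : (0:ℝ) < 1 - t)
    rwa [hderiv_iter (n + 1), norm_pow] at h
  have hderiv1 : ‖deriv F p‖ < 1 := by
    by_contra hcon
    push_neg at hcon
    have htend : Tendsto (fun n : ℕ => 4 * M * lam ^ n / (1 - t)) atTop (𝓝 0) := by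
      have h := ((tendsto_pow_atTop_nhds_zero_of_lt_one hlam0.le hlam1).const_mul
        (4 * M)).div_const (1 - t)
      simpa using h
    obtain ⟨n, hn⟩ := (htend.eventually_lt_const one_pos).exists
    have h1 : (1:ℝ) ≤ ‖deriv F p‖ ^ (n + 1) := one_le_pow₀ hcon
    linarith [hderivb n]
  refine ⟨p, hpb, hFp, ?_, hderiv1, ?_, ?_⟩
  · intro q hq hFq
    refine huniq q ?_ hFq
    have h1 : ‖F q‖ < t := hFt q (ball_subset_closedBall hq)
    rw [hFq] at h1
    exact mem_closedBall_zero_iff.2 h1.le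
  · refine ⟨(2 + 2 * M) / lam, by positivity, lam, hlam0, hlam1, ?_⟩
    intro k a ha b hb
    match k with
    | 0 =>
      simp only [Function.iterate_zero, id_eq, pow_zero, mul_one]
      have h1 : dist a b ≤ 2 := by
        rw [dist_eq_norm]
        have ha' := mem_closedBall_zero_iff.1 ha
        have hb' := mem_closedBall_zero_iff.1 hb
        calc ‖a - b‖ ≤ ‖a‖ + ‖b‖ := norm_sub_le _ _
        _ ≤ 2 := by linarith
      have h2 : (2:ℝ) ≤ (2 + 2 * M) / lam := by
        rw [le_div_iff₀ hlam0]
        nlinarith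
      linarith
    | (n + 1) =>
      rw [Function.iterate_succ_apply, Function.iterate_succ_apply]
      have h1 : F a ∈ closedBall (0:ℂ) t := mem_closedBall_zero_iff.2 (hFt a ha).le
      have h2 : F b ∈ closedBall (0:ℂ) t := mem_closedBall_zero_iff.2 (hFt b hb).le
      calc dist (F^[n] (F a)) (F^[n] (F b)) ≤ 2 * M * lam ^ n := hdistn _ _ h1 h2 n
      _ ≤ (2 + 2 * M) / lam * lam ^ (n + 1) := by
          rw [div_mul_eq_mul_div, pow_succ, le_div_iff₀ hlam0]
          have h3 : (0:ℝ) ≤ lam ^ n := by positivity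
          nlinarith
  · rw [Metric.tendstoUniformlyOn_iff]
    intro ε hε
    obtain ⟨N, hN⟩ := Filter.eventually_atTop.1 (htend0.eventually_lt_const hε)
    rw [Filter.eventually_atTop]
    refine ⟨N + 1, fun k hk z hz => ?_⟩
    obtain ⟨n, rfl⟩ : ∃ n, k = n + 1 := ⟨k - 1, by omega⟩
    have h1 : F z ∈ closedBall (0:ℂ) t := mem_closedBall_zero_iff.2 (hFt z hz).le
    have h2 := hdistn (F z) p h1 hpK n
    rw [Function.iterate_fixed hFp] at h2
    rw [dist_comm, Function.iterate_succ_apply]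
    calc dist (F^[n] (F z)) p ≤ 2 * M * lam ^ n := h2
    _ < ε := hN n (by omega)

end SchwarzContractionAux

set_option maxHeartbeats 800000 in
/-- Let `D = B(z₀, r)` be a (nonempty) open disk in `ℂ` and `f` holomorphic on a
neighbourhood of the closed disk `D̄` with `f(D̄) ⊆ D`. Then `f` has a unique
fixed point `p` in `D`, it is attracting (`|f′(p)| < 1`), the diameters of the
iterated images of `D̄` decay geometrically, and `f^[k] → p` uniformly on `D̄`. -/
theorem schwarz_contraction_disk (z₀ : ℂ) (r : ℝ) (hr : 0 < r) (f : ℂ → ℂ)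
    (U : Set ℂ) (hU : IsOpen U) (hDU : closure (Metric.ball z₀ r) ⊆ U)
    (hf : DifferentiableOn ℂ f U)
    (hmaps : f '' closure (Metric.ball z₀ r) ⊆ Metric.ball z₀ r) :
    ∃ p ∈ Metric.ball z₀ r, f p = p ∧
      (∀ q ∈ Metric.ball z₀ r, f q = q → q = p) ∧
      ‖deriv f p‖ < 1 ∧
      (∃ C : ℝ, 0 < C ∧ ∃ lam : ℝ, 0 < lam ∧ lam < 1 ∧
        ∀ k : ℕ, Metric.diam (f^[k] '' closure (Metric.ball z₀ r)) ≤ C * lam ^ k) ∧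
      TendstoUniformlyOn (fun (k : ℕ) (z : ℂ) => f^[k] z) (fun _ => p)
        Filter.atTop (closure (Metric.ball z₀ r)) := by
  have hcb : closure (Metric.ball z₀ r) = closedBall z₀ r := closure_ball z₀ hr.ne'
  have hrC : (r:ℂ) ≠ 0 := by exact_mod_cast hr.ne'
  set F : ℂ → ℂ := fun w => (f (z₀ + ↑r * w) - z₀) / ↑r with hF_def
  have hEq : ∀ u : ℂ, f (z₀ + ↑r * u) = z₀ + ↑r * F u := by
    intro u
    rw [hF_def]
    field_simp
    ring
  have hnorm_aff : ∀ (w : ℂ), ‖z₀ + ↑r * w - z₀‖ = r * ‖w‖ := by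
    intro w
    rw [add_sub_cancel_left, norm_mul, Complex.norm_real, Real.norm_of_nonneg hr.le]
  have hmem1 : ∀ w ∈ closedBall (0:ℂ) 1, z₀ + ↑r * w ∈ closedBall z₀ r := by
    intro w hw
    rw [mem_closedBall, dist_eq_norm, hnorm_aff]
    have := mem_closedBall_zero_iff.1 hw
    nlinarith
  have hmem1' : ∀ w ∈ ball (0:ℂ) 1, z₀ + ↑r * w ∈ ball z₀ r := by
    intro w hw
    rw [mem_ball, dist_eq_norm, hnorm_aff]
    have := mem_ball_zero_iff.1 hw
    nlinarith
  have hUsub : closedBall z₀ r ⊆ U := by rw [← hcb]; exact hDU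
  have haff : Differentiable ℂ (fun w : ℂ => z₀ + ↑r * w) :=
    (differentiable_const _).add ((differentiable_const _).mul differentiable_id)
  have hdF : DifferentiableOn ℂ F (ball 0 1) := by
    have h1 : DifferentiableOn ℂ (fun w => f (z₀ + ↑r * w)) (ball 0 1) :=
      hf.comp haff.differentiableOn
        (fun w hw => hUsub (hmem1 w (ball_subset_closedBall hw)))
    exact (h1.sub_const z₀).div_const _
  have hcF : ContinuousOn F (closedBall 0 1) := by
    have h1 : ContinuousOn (fun w => f (z₀ + ↑r * w)) (closedBall 0 1) :=
      hf.continuousOn.comp haff.continuous.continuousOn (fun w hw => hUsub (hmem1 w hw))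
    exact (h1.sub continuousOn_const).div_const _
  have hmF : MapsTo F (closedBall 0 1) (ball 0 1) := by
    intro w hw
    have h1 : f (z₀ + ↑r * w) ∈ ball z₀ r := by
      apply hmaps
      apply mem_image_of_mem
      rw [hcb]
      exact hmem1 w hw
    rw [mem_ball, dist_eq_norm] at h1
    rw [mem_ball_zero_iff, hF_def]
    simp only [norm_div, Complex.norm_real, Real.norm_of_nonneg hr.le]
    rw [div_lt_one hr]
    exact h1
  obtain ⟨p, hpb, hFp, huniq, hder, ⟨C, hC, lam, hl0, hl1, hdd⟩, hTU⟩ :=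
    unit_case F hdF hcF hmF
  have hit : ∀ (k : ℕ) (u : ℂ), f^[k] (z₀ + ↑r * u) = z₀ + ↑r * F^[k] u := by
    intro k
    induction k with
    | zero => intro u; simp
    | succ k ih =>
      intro u
      rw [Function.iterate_succ_apply', Function.iterate_succ_apply', ih u, hEq]
  have hinv : ∀ z ∈ closedBall z₀ r, ((z - z₀) / ↑r) ∈ closedBall (0:ℂ) 1 ∧
      z₀ + ↑r * ((z - z₀) / ↑r) = z := by
    intro z hz
    constructor
    · rw [mem_closedBall_zero_iff, norm_div, Complex.norm_real, Real.norm_of_nonneg hr.le,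
        div_le_one hr]
      rw [mem_closedBall, dist_eq_norm] at hz
      exact hz
    · field_simp
      ring
  refine ⟨z₀ + ↑r * p, ?_, ?_, ?_, ?_, ?_, ?_⟩
  · exact hmem1' p hpb
  · rw [hEq p, hFp]
  · -- uniqueness
    intro q hq hfq
    have ha : ‖(q - z₀) / ↑r‖ < 1 := by
      rw [norm_div, Complex.norm_real, Real.norm_of_nonneg hr.le, div_lt_one hr]
      rw [mem_ball, dist_eq_norm] at hq
      exact hq
    have hqe : z₀ + ↑r * ((q - z₀) / ↑r) = q := by field_simp; ring
    have hFa : F ((q - z₀) / ↑r) = (q - z₀) / ↑r := by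
      rw [hF_def]
      simp only []
      rw [hqe, hfq]
    have := huniq _ (mem_ball_zero_iff.2 ha) hFa
    rw [← hqe, this]
  · -- derivative
    have hP : z₀ + ↑r * p ∈ ball z₀ r := hmem1' p hpb
    have hfdiffP : DifferentiableAt ℂ f (z₀ + ↑r * p) :=
      hf.differentiableAt (hU.mem_nhds (hUsub (ball_subset_closedBall hP)))
    have hFdiffp : DifferentiableAt ℂ F p := hdF.differentiableAt (isOpen_ball.mem_nhds hpb)
    have hchain : deriv (fun w => f (z₀ + ↑r * w)) p = deriv f (z₀ + ↑r * p) * ↑r := by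
      have h1 : deriv (fun w : ℂ => z₀ + ↑r * w) p = ↑r := by
        have h0 : HasDerivAt (fun w : ℂ => z₀ + ↑r * w) (↑r * 1) p :=
          ((hasDerivAt_id p).const_mul (↑r : ℂ)).const_add z₀
        simpa using h0.deriv
      have h2 := deriv_comp p hfdiffP (haff p)
      rw [h1] at h2
      exact h2
    have hrhs : deriv (fun w => z₀ + ↑r * F w) p = ↑r * deriv F p := by
      rw [deriv_const_add, deriv_const_mul _ hFdiffp]
    have hfun : (fun w => f (z₀ + ↑r * w)) = fun w => z₀ + ↑r * F w := funext hEq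
    rw [hfun, hrhs] at hchain
    have : deriv f (z₀ + ↑r * p) = deriv F p := by
      rw [mul_comm] at hchain
      exact (mul_right_cancel₀ hrC hchain).symm
    rw [this]
    exact hder
  · -- diam
    refine ⟨r * C, by positivity, lam, hl0, hl1, ?_⟩
    intro k
    rw [hcb]
    have hnn : (0:ℝ) ≤ r * C * lam ^ k := by positivity
    apply Metric.diam_le_of_forall_dist_le hnn
    rintro x ⟨a, ha, rfl⟩ y ⟨b, hb, rfl⟩
    obtain ⟨ha1, ha2⟩ := hinv a ha
    obtain ⟨hb1, hb2⟩ := hinv b hb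
    rw [← ha2, ← hb2, hit k, hit k, dist_eq_norm]
    have h1 : z₀ + ↑r * F^[k] ((a - z₀)/↑r) - (z₀ + ↑r * F^[k] ((b - z₀)/↑r))
        = ↑r * (F^[k] ((a - z₀)/↑r) - F^[k] ((b - z₀)/↑r)) := by ring
    rw [h1, norm_mul, Complex.norm_real, Real.norm_of_nonneg hr.le]
    have h2 := hdd k _ ha1 _ hb1
    rw [dist_eq_norm] at h2
    nlinarith [norm_nonneg (F^[k] ((a - z₀)/↑r) - F^[k] ((b - z₀)/↑r))]
  · -- uniform convergence
    rw [Metric.tendstoUniformlyOn_iff]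
    intro ε hε
    have hTU' := Metric.tendstoUniformlyOn_iff.1 hTU (ε / r) (by positivity)
    filter_upwards [hTU'] with k hk
    intro z hz
    rw [hcb] at hz
    obtain ⟨ha1, ha2⟩ := hinv z hz
    rw [← ha2, hit k, dist_eq_norm]
    have h1 : z₀ + ↑r * p - (z₀ + ↑r * F^[k] ((z - z₀)/↑r))
        = ↑r * (p - F^[k] ((z - z₀)/↑r)) := by ring
    rw [h1, norm_mul, Complex.norm_real, Real.norm_of_nonneg hr.le]
    have h2 := hk _ ha1
    rw [dist_eq_norm] at h2
    calc r * ‖p - F^[k] ((z - z₀)/↑r)‖ < r * (ε / r) := by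
          apply mul_lt_mul_of_pos_left h2 hr
    _ = ε := by field_simp
end
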